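/- For any integer m with 0 ≤ m ≤ n, let θ = F(β) with β = (2, 2, 1 − 2m). Then for every x ∈ {0,1}ⁿ with ‖x‖₀ = m and every j ∈ {1,…,n}, the energy difference satisfies E(x^{(j)}; θ) − E(x; θ) ≥ 1. -/

import Mathlib

open scoped BigOperators
open scoped Classical
open Matrix MeasureTheory

namespace HopfieldPaper

/-- The space of (not necessarily admissible) Hopfield parameters `θ = (W, b)`. -/
abbrev Param (n : ℕ) := Matrix (Fin n) (Fin n) ℝ × (Fin n → ℝ)

variable {n : ℕ}

/-- `θ = (W, b)` is a Hopfield parameter: `W` is symmetric with zero diagonal. -/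
def IsHopfieldParam (θ : Param n) : Prop :=
  θ.1.IsSymm ∧ ∀ i, θ.1 i i = 0

/-- `x ∈ {0,1}ⁿ`. -/
def IsBinary (x : Fin n → ℝ) : Prop := ∀ i, x i = 0 ∨ x i = 1

/-- Energy `E(x; θ) = (1/2)·xᵀWx + bᵀx`. -/
noncomputable def energy (x : Fin n → ℝ) (θ : Param n) : ℝ :=
  (1 / 2) * (∑ i, ∑ j, x i * θ.1 i j * x j) + ∑ j, θ.2 j * x j

/-- `x^{(j)}`: the vector differing from `x` exactly in coordinate `j`. -/
noncomputable def flip (x : Fin n → ℝ) (j : Fin n) : Fin n → ℝ :=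
  Function.update x j (1 - x j)

/-- The inner product on parameter space.  Under the identification of
`θ = (W, b)` with `ω = (√2·a, b) ∈ ℝ^q` (`a` the strictly upper-triangular
entries of `W`), the Euclidean inner product on `ℝ^q` corresponds to
`⟨θ, η⟩ = Σᵢⱼ Wᵢⱼ·W'ᵢⱼ + Σⱼ bⱼ·b'ⱼ`; in particular `‖ω‖² = ‖W‖_F² + ‖b‖²`. -/
noncomputable def pInner (θ η : Param n) : ℝ :=
  (∑ i, ∑ j, θ.1 i j * η.1 i j) + ∑ j, θ.2 j * η.2 j

/-- The norm on parameter space: `‖ω‖ = √(‖W‖_F² + ‖b‖²)`. -/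
noncomputable def pNorm (θ : Param n) : ℝ := Real.sqrt (pInner θ θ)

/-- The representer `u_j(x)`: the unique element of parameter space with
`⟨u_j(x), θ⟩ = E(x^{(j)}; θ) − E(x; θ)` for every Hopfield parameter `θ`. -/
noncomputable def uvec (x : Fin n → ℝ) (j : Fin n) : Param n :=
  (Matrix.of fun i l =>
      if i = j ∧ l ≠ j then (1 - 2 * x j) * x l / 2
      else if l = j ∧ i ≠ j then (1 - 2 * x j) * x i / 2
      else 0,
   fun l => if l = j then 1 - 2 * x j else 0)

/-- `‖x‖₀`: the number of nonzero coordinates. -/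
noncomputable def l0norm (x : Fin n → ℝ) : ℕ :=
  (Finset.univ.filter fun i => x i ≠ 0).card

variable {v : ℕ}

/-- The type of unordered pairs of distinct elements of `Fin v`
(the "unordered pairs of `{1,…,v}`"). -/
abbrev EdgeIdx (v : ℕ) := {p : Sym2 (Fin v) // ¬ p.IsDiag}

/-- The permutation of `Sym2 (Fin v)` induced by a vertex permutation. -/
def sym2Perm (φ : Equiv.Perm (Fin v)) : Equiv.Perm (Sym2 (Fin v)) where
  toFun := Sym2.map φ
  invFun := Sym2.map φ.symm
  left_inv := fun p => by rw [Sym2.map_map]; simp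
  right_inv := fun p => by rw [Sym2.map_map]; simp

/-- The induced permutation of unordered pairs of distinct vertices. -/
def offDiagPerm (φ : Equiv.Perm (Fin v)) : Equiv.Perm (EdgeIdx v) :=
  (sym2Perm φ).subtypePerm (fun p => by
    simp only [sym2Perm, Equiv.coe_fn_mk]
    exact (Sym2.isDiag_map φ.injective).not)

/-- The edge permutation `π_φ` of `{1,…,n}` induced by the vertex permutation
`φ`; it satisfies `π_φ(Ind({a,b})) = Ind({φ(a),φ(b)})`. -/
def edgePerm (Ind : EdgeIdx v ≃ Fin n) (φ : Equiv.Perm (Fin v)) :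
    Equiv.Perm (Fin n) :=
  Ind.permCongr (offDiagPerm φ)

/-- `Φ_n`: the set of permutation matrices of vertex-induced edge permutations. -/
noncomputable def PhiSet (Ind : EdgeIdx v ≃ Fin n) :
    Set (Matrix (Fin n) (Fin n) ℝ) :=
  {P | ∃ φ : Equiv.Perm (Fin v), P = (edgePerm Ind φ).permMatrix ℝ}

/-- The two-element vertex set `Ind⁻¹(j)` of an edge index, as a `Finset`. -/
noncomputable def pairFinset (Ind : EdgeIdx v ≃ Fin n) (j : Fin n) : Finset (Fin v) :=
  Finset.univ.filter (fun a => a ∈ (Ind.symm j : Sym2 (Fin v)))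

/-- Edge adjacency: `j ∼ l` iff `|Ind⁻¹(j) ∩ Ind⁻¹(l)| = 1`. -/
noncomputable def edgeAdj (Ind : EdgeIdx v ≃ Fin n) (j l : Fin n) : Prop :=
  (pairFinset Ind j ∩ pairFinset Ind l).card = 1

/-- A permutation of edge indices preserves edge adjacency. -/
noncomputable def PreservesEdgeAdj (Ind : EdgeIdx v ≃ Fin n)
    (π : Equiv.Perm (Fin n)) : Prop :=
  ∀ j l : Fin n, edgeAdj Ind (π j) (π l) ↔ edgeAdj Ind j l

/-- `Q_n`: the set of permutation matrices of edge-adjacency-preserving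
permutations. -/
noncomputable def QSet (Ind : EdgeIdx v ≃ Fin n) :
    Set (Matrix (Fin n) (Fin n) ℝ) :=
  {Q | ∃ π : Equiv.Perm (Fin n), PreservesEdgeAdj Ind π ∧ Q = π.permMatrix ℝ}

/-- Orbit of a vector under a set of matrices: `Orb(x, Γ) = {P·x : P ∈ Γ}`. -/
noncomputable def morb (Γ : Set (Matrix (Fin n) (Fin n) ℝ)) (x : Fin n → ℝ) :
    Set (Fin n → ℝ) :=
  {y | ∃ P ∈ Γ, y = P.mulVec x}

/-- The linear map `F : ℝ³ → Θ` sending `β` to `(W, b)` with `W_{ij} = 0` if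
`i = j`, `W_{ij} = β₁` if `i ∼ j`, `W_{ij} = β₂` if `i ≠ j` and `i ≁ j`, and
`b_j = β₃`. -/
noncomputable def Fmap (Ind : EdgeIdx v ≃ Fin n) (β : ℝ × ℝ × ℝ) : Param n :=
  (Matrix.of fun i j =>
      if i = j then 0 else if edgeAdj Ind i j then β.1 else β.2.1,
   fun _ => β.2.2)

lemma energy_Fmap_const {v n : ℕ} (Ind : EdgeIdx v ≃ Fin n) (c : ℝ)
    (x : Fin n → ℝ) (hx : IsBinary x) :
    energy x (Fmap Ind (2, 2, c)) =
      (∑ i, x i) ^ 2 - (∑ i, x i) + c * ∑ i, x i := by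
  have hterm : ∀ i l : Fin n,
      x i * (Fmap Ind (2, 2, c)).1 i l * x l
        = 2 * x i * x l - (if i = l then 2 * x i * x l else 0) := by
    intro i l
    simp only [Fmap, Matrix.of_apply]
    split_ifs <;> ring
  have hsq : ∀ i : Fin n, x i * x i = x i := by
    intro i; rcases hx i with h | h <;> rw [h] <;> ring
  have hdouble : (∑ i, ∑ l, x i * (Fmap Ind (2, 2, c)).1 i l * x l)
      = 2 * (∑ i, x i) ^ 2 - 2 * ∑ i, x i := by
    have : (∑ i, ∑ l, x i * (Fmap Ind (2, 2, c)).1 i l * x l)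
        = ∑ i : Fin n, (2 * x i * (∑ l, x l) - 2 * x i * x i) := by
      refine Finset.sum_congr rfl fun i _ => ?_
      calc (∑ l, x i * (Fmap Ind (2, 2, c)).1 i l * x l)
          = ∑ l, (2 * x i * x l - (if i = l then 2 * x i * x l else 0)) :=
            Finset.sum_congr rfl fun l _ => hterm i l
        _ = (∑ l, 2 * x i * x l) - ∑ l, (if i = l then 2 * x i * x l else 0) :=
            Finset.sum_sub_distrib _ _
        _ = 2 * x i * (∑ l, x l) - 2 * x i * x i := by
            rw [Finset.sum_ite_eq, Finset.mul_sum]; simp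
    rw [this, Finset.sum_sub_distrib]
    have h1 : (∑ i : Fin n, 2 * x i * (∑ l, x l)) = 2 * (∑ i, x i) ^ 2 := by
      rw [← Finset.sum_mul, ← Finset.mul_sum]; ring
    have h2 : (∑ i : Fin n, 2 * x i * x i) = 2 * ∑ i, x i := by
      rw [Finset.mul_sum]
      exact Finset.sum_congr rfl fun i _ => by rw [mul_assoc, hsq i]
    rw [h1, h2]
  rw [energy, hdouble]
  have hb : (∑ l, (Fmap Ind (2, 2, c)).2 l * x l) = c * ∑ i, x i := by
    simp [Fmap, Finset.mul_sum]
  rw [hb]; ring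

lemma sum_eq_l0norm {n : ℕ} (x : Fin n → ℝ) (hx : IsBinary x) :
    (∑ i, x i) = (l0norm x : ℝ) := by
  rw [l0norm, ← Finset.sum_filter_ne_zero Finset.univ (f := x)]
  rw [Finset.card_eq_sum_ones, Nat.cast_sum]
  refine Finset.sum_congr rfl fun i hi => ?_
  simp only [Finset.mem_filter] at hi
  rcases hx i with h | h
  · exact absurd h hi.2
  · simp [h]

/-- With `θ = F(2, 2, 1 − 2m)`, every binary `x` with
`‖x‖₀ = m` has all energy gaps at least 1. -/
theorem Fmap_memorizes_sparsity {v n : ℕ} (hv : 2 ≤ v)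
    (Ind : EdgeIdx v ≃ Fin n) (m : ℕ) (hm : m ≤ n) (x : Fin n → ℝ)
    (hx : IsBinary x) (hx0 : l0norm x = m) (j : Fin n) :
    energy (flip x j) (Fmap Ind (2, 2, 1 - 2 * (m : ℝ)))
      - energy x (Fmap Ind (2, 2, 1 - 2 * (m : ℝ))) ≥ 1 := by
  have hy : IsBinary (flip x j) := by
    intro i
    by_cases h : i = j
    · subst h; simp only [flip, Function.update_self]
      rcases hx i with h1 | h1 <;> rw [h1] <;> norm_num
    · simp only [flip, Function.update_of_ne h]; exact hx i
  have hS : (∑ i, x i) = (m : ℝ) := by rw [sum_eq_l0norm x hx, hx0]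
  have hT : (∑ i, flip x j i) = (m : ℝ) + (1 - 2 * x j) := by
    have : (∑ i, flip x j i) = (1 - x j) + ∑ i ∈ Finset.univ.erase j, x i := by
      rw [flip, Finset.sum_update_of_mem (Finset.mem_univ j)]
      congr 1
      exact (Finset.sum_congr (by rw [Finset.sdiff_singleton_eq_erase])
        fun i _ => rfl)
    rw [this, Finset.sum_erase_eq_sub (Finset.mem_univ j), hS]; ring
  rw [energy_Fmap_const Ind _ _ hy, energy_Fmap_const Ind _ _ hx, hS, hT]
  rcases hx j with h | h <;> rw [h] <;> ring_nf <;> norm_num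

end HopfieldPaper
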